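/- (Quaternionic Stone–Weierstrass.) Let Y be a compact Hausdorff topological space and let A be an ℝ-subalgebra of the algebra C(Y, ℍ) of continuous quaternion-valued functions on Y such that A contains every constant function (with arbitrary quaternion value) and A separates the points of Y (for all x ≠ y in Y there exists f ∈ A with f x ≠ f y). Then A is dense in C(Y, ℍ) for the topology of uniform convergence (equivalently, the topological closure of A is all of C(Y, ℍ)). -/

import Mathlib

open scoped Quaternion
namespace SWQuat

def qI : ℍ[ℝ] := ⟨0,1,0,0⟩
def qJ : ℍ[ℝ] := ⟨0,0,1,0⟩
def qK : ℍ[ℝ] := ⟨0,0,0,1⟩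

noncomputable def ι (Y : Type) [TopologicalSpace Y] : C(Y, ℝ) →ₐ[ℝ] C(Y, ℍ[ℝ]) :=
  (Algebra.ofId ℝ ℍ[ℝ]).compLeftContinuous ℝ (continuous_algebraMap ℝ ℍ[ℝ])

@[simp] lemma ι_apply {Y : Type} [TopologicalSpace Y] (f : C(Y, ℝ)) (t : Y) :
    ι Y f t = (f t : ℍ[ℝ]) := rfl

lemma ι_eq_comp {Y : Type} [TopologicalSpace Y] (f : C(Y, ℝ)) :
    ι Y f = ContinuousMap.comp ⟨_, continuous_algebraMap ℝ ℍ[ℝ]⟩ f := rfl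

lemma continuous_ι (Y : Type) [TopologicalSpace Y] : Continuous (ι Y) := by
  have : (⇑(ι Y) : C(Y,ℝ) → C(Y,ℍ[ℝ])) =
      (ContinuousMap.comp ⟨_, continuous_algebraMap ℝ ℍ[ℝ]⟩) := by
    funext f; exact ι_eq_comp f
  rw [this]
  exact ContinuousMap.continuous_postcomp _

lemma re_identity (q : ℍ[ℝ]) : ((q.re : ℍ[ℝ])) =
    (4⁻¹:ℝ) • (q - qI*q*qI - qJ*q*qJ - qK*q*qK) := by
  ext <;> simp only [Quaternion.re_mul, Quaternion.imI_mul, Quaternion.imJ_mul, Quaternion.imK_mul, Quaternion.re_sub, Quaternion.imI_sub, Quaternion.imJ_sub, Quaternion.imK_sub, Quaternion.re_smul, Quaternion.imI_smul, Quaternion.imJ_smul, Quaternion.imK_smul] <;> simp [qI, qJ, qK] <;> ring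

variable {Y : Type} [TopologicalSpace Y]

noncomputable def reMap (g : C(Y, ℍ[ℝ])) : C(Y, ℝ) :=
  ⟨fun t => (g t).re, Quaternion.continuous_re.comp g.continuous⟩

lemma reMap_mem (A : Subalgebra ℝ C(Y, ℍ[ℝ]))
    (hconst : ∀ c : ℍ[ℝ], ContinuousMap.const Y c ∈ A)
    {g : C(Y, ℍ[ℝ])} (hg : g ∈ A) : ι Y (reMap g) ∈ A := by
  have h : ι Y (reMap g) = (4⁻¹:ℝ) •
      (g - ContinuousMap.const Y qI * g * ContinuousMap.const Y qI
         - ContinuousMap.const Y qJ * g * ContinuousMap.const Y qJ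
         - ContinuousMap.const Y qK * g * ContinuousMap.const Y qK) := by
    refine ContinuousMap.ext fun t => ?_
    simp only [ι_apply, reMap, ContinuousMap.coe_mk, ContinuousMap.smul_apply,
      ContinuousMap.sub_apply, ContinuousMap.mul_apply, ContinuousMap.const_apply]
    exact re_identity (g t)
  rw [h]
  exact A.smul_mem (A.sub_mem (A.sub_mem (A.sub_mem hg
    (A.mul_mem (A.mul_mem (hconst _) hg) (hconst _)))
    (A.mul_mem (A.mul_mem (hconst _) hg) (hconst _)))
    (A.mul_mem (A.mul_mem (hconst _) hg) (hconst _))) _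

lemma reMap_apply (g : C(Y, ℍ[ℝ])) (t : Y) : reMap g t = (g t).re := rfl

end SWQuat

open SWQuat in
open scoped Quaternion in
theorem stoneWeierstrass_quaternion
    (Y : Type) [TopologicalSpace Y] [CompactSpace Y] [T2Space Y]
    (A : Subalgebra ℝ C(Y, ℍ[ℝ]))
    (hconst : ∀ c : ℍ[ℝ], ContinuousMap.const Y c ∈ A)
    (hsep : ∀ x y : Y, x ≠ y → ∃ f ∈ A, f x ≠ f y) :
    closure (A : Set C(Y, ℍ[ℝ])) = Set.univ := by
  set B : Subalgebra ℝ C(Y, ℝ) := A.comap (ι Y) with hB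
  have comp_mem : ∀ {g : C(Y, ℍ[ℝ])}, g ∈ A → reMap g ∈ B := fun hg => reMap_mem A hconst hg
  have hBsep : B.SeparatesPoints := by
    intro x y hxy
    obtain ⟨f, hfA, hfxy⟩ := hsep x y hxy
    have h1 : reMap f ∈ B := comp_mem hfA
    have hi : reMap (ContinuousMap.const Y (-qI) * f) ∈ B :=
      comp_mem (A.mul_mem (hconst _) hfA)
    have hj : reMap (ContinuousMap.const Y (-qJ) * f) ∈ B :=
      comp_mem (A.mul_mem (hconst _) hfA)
    have hk : reMap (ContinuousMap.const Y (-qK) * f) ∈ B :=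
      comp_mem (A.mul_mem (hconst _) hfA)
    by_contra hcon
    push_neg at hcon
    simp only [Set.mem_image, not_exists] at hcon
    apply hfxy
    have e1 := hcon _ ⟨reMap f, h1, rfl⟩
    have e2 := hcon _ ⟨_, hi, rfl⟩
    have e3 := hcon _ ⟨_, hj, rfl⟩
    have e4 := hcon _ ⟨_, hk, rfl⟩
    simp only [reMap_apply, ContinuousMap.mul_apply, ContinuousMap.const_apply,
      not_not] at e1 e2 e3 e4
    ext
    · exact e1
    · simp only [Quaternion.re_mul, Quaternion.re_neg, Quaternion.imI_neg, Quaternion.imJ_neg, Quaternion.imK_neg] at e2; simpa [qI] using e2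
    · simp only [Quaternion.re_mul, Quaternion.re_neg, Quaternion.imI_neg, Quaternion.imJ_neg, Quaternion.imK_neg] at e3; simpa [qJ] using e3
    · simp only [Quaternion.re_mul, Quaternion.re_neg, Quaternion.imI_neg, Quaternion.imJ_neg, Quaternion.imK_neg] at e4; simpa [qK] using e4
  have hBtop : B.topologicalClosure = ⊤ :=
    ContinuousMap.subalgebra_topologicalClosure_eq_top_of_separatesPoints B hBsep
  have hι : ∀ h : C(Y, ℝ), ι Y h ∈ A.topologicalClosure := by
    intro h
    have hh : h ∈ closure (B : Set C(Y, ℝ)) := by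
      have h2 : h ∈ B.topologicalClosure := by rw [hBtop]; trivial
      exact h2
    have hmaps : Set.MapsTo (ι Y) (B : Set C(Y, ℝ)) (A : Set C(Y, ℍ[ℝ])) := fun b hb => hb
    exact (hmaps.closure (continuous_ι Y)) hh
  have hall : ∀ g : C(Y, ℍ[ℝ]), g ∈ A.topologicalClosure := by
    intro g
    have hdecomp : g = ι Y (reMap g)
        + ι Y ⟨fun t => (g t).imI, Quaternion.continuous_imI.comp g.continuous⟩ * ContinuousMap.const Y qI
        + ι Y ⟨fun t => (g t).imJ, Quaternion.continuous_imJ.comp g.continuous⟩ * ContinuousMap.const Y qJ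
        + ι Y ⟨fun t => (g t).imK, Quaternion.continuous_imK.comp g.continuous⟩ * ContinuousMap.const Y qK := by
      refine ContinuousMap.ext fun t => ?_
      simp only [ContinuousMap.add_apply, ContinuousMap.mul_apply, ContinuousMap.const_apply,
        ι_apply, reMap_apply, ContinuousMap.coe_mk]
      ext <;> simp only [Quaternion.re_add, Quaternion.imI_add, Quaternion.imJ_add, Quaternion.imK_add, Quaternion.re_mul, Quaternion.imI_mul, Quaternion.imJ_mul, Quaternion.imK_mul] <;> simp [qI, qJ, qK]
    rw [hdecomp]
    have hconst' : ∀ c : ℍ[ℝ], ContinuousMap.const Y c ∈ A.topologicalClosure :=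
      fun c => A.le_topologicalClosure (hconst c)
    exact add_mem (add_mem (add_mem (hι _) (mul_mem (hι _) (hconst' _)))
      (mul_mem (hι _) (hconst' _))) (mul_mem (hι _) (hconst' _))
  have htop : A.topologicalClosure = ⊤ := by
    ext g; simp [hall g, Algebra.mem_top]
  calc closure (A : Set C(Y, ℍ[ℝ])) = (A.topologicalClosure : Set C(Y, ℍ[ℝ])) := rfl
    _ = Set.univ := by rw [htop]; rfl
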